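/- Let Ω ⊆ ℝᵐ be nonempty, closed, and convex, let x ∈ Ω, g ∈ ℝᵐ, and γ > 0. Then ‖x − Π_Ω[x − g]‖ ≤ max{1, 1/γ} · ‖x − Π_Ω[x − γ g]‖. -/

import Mathlib

open RealInnerProductSpace
set_option maxHeartbeats 1000000

lemma vi_aux {m : ℕ} {Ω : Set (EuclideanSpace ℝ (Fin m))} (hconv : Convex ℝ Ω)
    {P : EuclideanSpace ℝ (Fin m) → EuclideanSpace ℝ (Fin m)}
    (hP : ∀ y, P y ∈ Ω ∧ ∀ z ∈ Ω, ‖y - P y‖ ≤ ‖y - z‖)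
    (y : EuclideanSpace ℝ (Fin m)) :
    ∀ z ∈ Ω, (inner ℝ (y - P y) (z - P y) : ℝ) ≤ 0 := by
  haveI : Nonempty Ω := ⟨⟨P y, (hP y).1⟩⟩
  have hbdd : BddBelow (Set.range fun w : Ω => ‖y - (w : EuclideanSpace ℝ (Fin m))‖) := by
    refine ⟨0, ?_⟩
    rintro r ⟨w, rfl⟩
    exact norm_nonneg _
  have h1 : ‖y - P y‖ = ⨅ w : Ω, ‖y - (w : EuclideanSpace ℝ (Fin m))‖ := by
    apply le_antisymm
    · exact le_ciInf fun w => (hP y).2 w w.2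
    · exact ciInf_le hbdd ⟨P y, (hP y).1⟩
  exact (norm_eq_iInf_iff_real_inner_le_zero hconv (hP y).1).1 h1

/-- core: for 0 < s ≤ t, the quadratic inequality. -/
lemma core_aux {m : ℕ} {Ω : Set (EuclideanSpace ℝ (Fin m))} (hconv : Convex ℝ Ω)
    {P : EuclideanSpace ℝ (Fin m) → EuclideanSpace ℝ (Fin m)}
    (hP : ∀ y, P y ∈ Ω ∧ ∀ z ∈ Ω, ‖y - P y‖ ≤ ‖y - z‖)
    (x g : EuclideanSpace ℝ (Fin m)) {s t : ℝ} (hs : 0 < s) (hst : s ≤ t) :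
    (t/s) * ‖x - P (x - s • g)‖ ^ 2 + ‖x - P (x - t • g)‖ ^ 2 ≤
      (1 + t/s) * (inner ℝ (x - P (x - s • g)) (x - P (x - t • g)) : ℝ) := by
  set u := P (x - s • g) with hu
  set v := P (x - t • g) with hv
  have h1 : (inner ℝ ((x - s • g) - u) (v - u) : ℝ) ≤ 0 := vi_aux hconv hP _ v (hP _).1
  have h2 : (inner ℝ ((x - t • g) - v) (u - v) : ℝ) ≤ 0 := vi_aux hconv hP _ u (hP _).1
  set a := x - u with ha
  set b := x - v with hb
  have e1 : (x - s • g) - u = a - s • g := by rw [ha]; abel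
  have e2 : v - u = a - b := by rw [ha, hb]; abel
  have e3 : (x - t • g) - v = b - t • g := by rw [hb]; abel
  have e4 : u - v = b - a := by rw [ha, hb]; abel
  rw [e1, e2] at h1
  rw [e3, e4] at h2
  rw [inner_sub_left, real_inner_smul_left] at h1
  rw [inner_sub_left, real_inner_smul_left] at h2
  have h1' : (inner ℝ a (a - b) : ℝ) - s * (inner ℝ g (a - b) : ℝ) ≤ 0 := h1
  have h2' : (inner ℝ b (b - a) : ℝ) - t * (inner ℝ g (b - a) : ℝ) ≤ 0 := h2
  have hab : (inner ℝ g (b - a) : ℝ) = - (inner ℝ g (a - b) : ℝ) := by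
    rw [← inner_neg_right]; congr 1; abel
  have haa : (inner ℝ a (a - b) : ℝ) = ‖a‖^2 - (inner ℝ a b : ℝ) := by
    rw [inner_sub_right, real_inner_self_eq_norm_sq]
  have hbb : (inner ℝ b (b - a) : ℝ) = ‖b‖^2 - (inner ℝ a b : ℝ) := by
    rw [inner_sub_right, real_inner_self_eq_norm_sq, real_inner_comm]
  rw [haa] at h1'
  rw [hbb, hab] at h2'
  have hts : 0 < t / s := div_pos (lt_of_lt_of_le hs hst) hs
  have key : (t/s) * (‖a‖^2 - (inner ℝ a b : ℝ) - s * (inner ℝ g (a - b) : ℝ)) ≤ 0 :=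
    mul_nonpos_of_nonneg_of_nonpos hts.le h1'
  have hcancel : (t/s) * s = t := div_mul_cancel₀ t hs.ne'
  nlinarith [key, h2']

theorem stmt2 {m : ℕ} (Ω : Set (EuclideanSpace ℝ (Fin m)))
    (hne : Ω.Nonempty) (hcl : IsClosed Ω) (hconv : Convex ℝ Ω)
    (P : EuclideanSpace ℝ (Fin m) → EuclideanSpace ℝ (Fin m))
    (hP : ∀ y, P y ∈ Ω ∧ ∀ z ∈ Ω, ‖y - P y‖ ≤ ‖y - z‖)
    (x g : EuclideanSpace ℝ (Fin m)) (hx : x ∈ Ω) (γ : ℝ) (hγ : 0 < γ) :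
    ‖x - P (x - g)‖ ≤ max 1 (1 / γ) * ‖x - P (x - γ • g)‖ := by
  have hone : (1:ℝ) • g = g := one_smul ℝ g
  rcases le_total 1 γ with h | h
  · -- γ ≥ 1 : max = 1, use s = 1, t = γ
    have hmax : max 1 (1/γ) = 1 := max_eq_left (by
      rw [div_le_one hγ]; exact h)
    rw [hmax, one_mul]
    have := core_aux hconv hP x g one_pos h
    rw [hone] at this
    set α := ‖x - P (x - g)‖
    set β := ‖x - P (x - γ • g)‖
    have hip : (inner ℝ (x - P (x - g)) (x - P (x - γ • g)) : ℝ) ≤ α * β := real_inner_le_norm _ _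
    have hα : 0 ≤ α := norm_nonneg _
    have hβ : 0 ≤ β := norm_nonneg _
    simp only [div_one] at this
    nlinarith [mul_nonneg (sub_nonneg.2 h) hα, sq_nonneg (α - β)]
  · -- γ ≤ 1 : max = 1/γ, use s = γ, t = 1
    have hmax : max 1 (1/γ) = 1/γ := max_eq_right (by
      rw [le_div_iff₀ hγ]; simpa using h)
    rw [hmax]
    have := core_aux hconv hP x g hγ h
    rw [hone] at this
    set α := ‖x - P (x - γ • g)‖
    set β := ‖x - P (x - g)‖
    have hip : (inner ℝ (x - P (x - γ • g)) (x - P (x - g)) : ℝ) ≤ α * β := real_inner_le_norm _ _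
    have hα : 0 ≤ α := norm_nonneg _
    have hβ : 0 ≤ β := norm_nonneg _
    have hγ1 : 1 ≤ 1/γ := by rw [le_div_iff₀ hγ]; simpa using h
    nlinarith [mul_nonneg (sub_nonneg.2 hγ1) hα, sq_nonneg (α - β),
      mul_pos hγ hγ, div_pos one_pos hγ]
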